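/- arXiv:0903.0683 — 2 statements merged into one kernel-verified Lean document; each statement's English description precedes it below -/
import Mathlib

section
/- For all 0 < x < 1, L(−x/(1−x)) = −L(x) (Landen's identity for the Rogers L-function). -/
open Real Topology Filter

noncomputable def Li2 (x : ℝ) : ℝ := -∫ t in (0:ℝ)..x, Real.log (1 - t) / t

noncomputable def rogersL (x : ℝ) : ℝ :=
  Li2 x + (1/2) * Real.log |x| * Real.log (1 - x)

noncomputable def lgg : ℝ → ℝ := fun t => if t = 0 then -1 else Real.log (1 - t) / t

lemma lgg_contAt {t : ℝ} (ht : t < 1) : ContinuousAt lgg t := by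
  rcases eq_or_ne t 0 with rfl | h0
  · have hd : HasDerivAt (fun s : ℝ => Real.log (1 - s)) (-1) 0 := by
      have h1 : HasDerivAt (fun s : ℝ => 1 - s) (-1) 0 := by
        simpa using (hasDerivAt_id (0:ℝ)).const_sub 1
      have := h1.log (by norm_num)
      simpa using this
    have hs := hasDerivAt_iff_tendsto_slope.mp hd
    have hs' : Filter.Tendsto lgg (𝓝[≠] (0:ℝ)) (𝓝 (-1)) := by
      refine hs.congr' ?_
      filter_upwards [self_mem_nhdsWithin] with t ht
      simp only [Set.mem_compl_iff, Set.mem_singleton_iff] at ht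
      simp [lgg, ht, slope_def_field, neg_div_neg_eq]
    have hp : Filter.Tendsto lgg (pure (0:ℝ)) (𝓝 (-1)) := by
      have : lgg 0 = -1 := by simp [lgg]
      simpa [this] using tendsto_pure_nhds lgg 0
    have : Filter.Tendsto lgg (𝓝 (0:ℝ)) (𝓝 (-1)) := by
      rw [← nhdsNE_sup_pure]
      exact hs'.sup hp
    simpa [ContinuousAt, lgg] using this
  · have hc : ContinuousAt (fun t : ℝ => Real.log (1 - t) / t) t := by
      exact ((Real.continuousAt_log (by simpa using sub_ne_zero.mpr (ne_of_lt ht).symm)).comp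
        ((continuous_const.sub continuous_id).continuousAt)).div continuousAt_id h0
    refine hc.congr ?_
    filter_upwards [isOpen_compl_singleton.mem_nhds h0] with s hs
    simp only [Set.mem_compl_iff, Set.mem_singleton_iff] at hs
    simp [lgg, hs]

lemma lgg_contOn : ContinuousOn lgg (Set.Iio 1) := fun t ht =>
  (lgg_contAt ht).continuousWithinAt

lemma lgg_intInt {a b : ℝ} (ha : a < 1) (hb : b < 1) :
    IntervalIntegrable lgg MeasureTheory.volume a b := by
  apply ContinuousOn.intervalIntegrable
  apply lgg_contOn.mono
  intro u htm
  rw [Set.uIcc_eq_union] at htm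
  rcases htm with h | h
  · exact lt_of_le_of_lt h.2 hb
  · exact lt_of_le_of_lt h.2 ha

lemma Li2_eq (x : ℝ) : Li2 x = -∫ t in (0:ℝ)..x, lgg t := by
  unfold Li2
  congr 1
  apply intervalIntegral.integral_congr_ae
  have h0 : ∀ᵐ t ∂(MeasureTheory.volume : MeasureTheory.Measure ℝ), t ≠ 0 := by
    refine MeasureTheory.ae_iff.mpr ?_
    simp
  filter_upwards [h0] with t ht _
  simp [lgg, ht]

lemma Li2_hasDerivAt {x : ℝ} (hx : x < 1) : HasDerivAt Li2 (-(lgg x)) x := by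
  have h : HasDerivAt (fun y => ∫ t in (0:ℝ)..y, lgg t) (lgg x) x := by
    refine intervalIntegral.integral_hasDerivAt_right (lgg_intInt one_pos hx) ?_ (lgg_contAt hx)
    exact lgg_contOn.stronglyMeasurableAtFilter isOpen_Iio _ hx
  have : Li2 = fun y => -∫ t in (0:ℝ)..y, lgg t := funext fun y => Li2_eq y
  rw [this]
  exact h.neg

lemma landen_Li2 (x : ℝ) (h1 : 0 < x) (h2 : x < 1) :
    Li2 (-x / (1 - x)) = -Li2 x - (1/2) * (Real.log (1 - x))^2 := by
  set F : ℝ → ℝ := fun y => Li2 (-y / (1 - y)) + Li2 y + (1/2) * (Real.log (1 - y))^2 with hF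
  have key : ∀ y ∈ Set.Icc (0:ℝ) x, HasDerivAt F 0 y := by
    intro y hy
    obtain ⟨hy0, hyx⟩ := hy
    have hy1 : y < 1 := lt_of_le_of_lt hyx h2
    have h1y : (0:ℝ) < 1 - y := by linarith
    -- derivative of u y = -y/(1-y)
    have hu : HasDerivAt (fun s : ℝ => -s / (1 - s)) (-1 / (1 - y)^2) y := by
      have ha : HasDerivAt (fun s : ℝ => -s) (-1) y := (hasDerivAt_id y).neg
      have hb : HasDerivAt (fun s : ℝ => 1 - s) (-1) y := by
        simpa using (hasDerivAt_id y).const_sub 1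
      have := ha.div hb (by linarith)
      exact this.congr_deriv (by ring)
    set u := -y / (1 - y) with hu_def
    have hu1 : u < 1 := by
      have hq : 0 ≤ y / (1 - y) := div_nonneg hy0 h1y.le
      rw [hu_def, neg_div]
      linarith
    have hLu : HasDerivAt Li2 (-(lgg u)) u := Li2_hasDerivAt hu1
    have hcomp : HasDerivAt (fun s : ℝ => Li2 (-s / (1 - s)))
        ((-(lgg u)) * (-1 / (1 - y)^2)) y := by have := hLu.comp y hu; exact this
    have hLy : HasDerivAt Li2 (-(lgg y)) y := Li2_hasDerivAt hy1
    have hlog : HasDerivAt (fun s : ℝ => (1/2) * (Real.log (1 - s))^2)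
        ((1/2) * (2 * Real.log (1 - y) * (-1 / (1 - y)))) y := by
      have hb : HasDerivAt (fun s : ℝ => 1 - s) (-1) y := by
        simpa using (hasDerivAt_id y).const_sub 1
      have hl : HasDerivAt (fun s : ℝ => Real.log (1 - s)) (-1 / (1 - y)) y :=
        hb.log (by linarith)
      have := (hl.pow 2).const_mul (1/2 : ℝ)
      exact this.congr_deriv (by ring)
    have hsum := (hcomp.add hLy).add hlog
    have hsum' : HasDerivAt F _ y := hsum
    refine hsum'.congr_deriv (Eq.symm ?_)
    -- now compute the total derivative is 0
    have h1u : 1 - u = (1 - y)⁻¹ := by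
      rw [hu_def]
      field_simp; ring
    have hlogu : Real.log (1 - u) = -Real.log (1 - y) := by
      rw [h1u, Real.log_inv]
    rcases eq_or_ne y 0 with rfl | hy0'
    · have : u = 0 := by simp [hu_def]
      simp [lgg, this]
    · have hu0 : u ≠ 0 := by
        rw [hu_def]
        exact div_ne_zero (neg_ne_zero.mpr hy0') (by linarith)
      rw [show lgg u = Real.log (1 - u) / u from if_neg hu0,
        show lgg y = Real.log (1 - y) / y from if_neg hy0', hlogu, hu_def]
      field_simp
      ring
  have hint : IntervalIntegrable (fun _ : ℝ => (0:ℝ)) MeasureTheory.volume 0 x :=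
    intervalIntegrable_const
  have := intervalIntegral.integral_eq_sub_of_hasDerivAt
    (fun y hy => key y (by rwa [Set.uIcc_of_le h1.le] at hy)) hint
  simp only [intervalIntegral.integral_zero] at this
  have hF0 : F 0 = 0 := by
    simp [hF, Li2, intervalIntegral.integral_same]
  have hFx : F x = 0 := by
    have := this.symm
    rw [hF0] at this
    linarith [this]
  have := hFx
  simp only [hF] at this
  linarith

theorem rogersL_landen (x : ℝ) (h1 : 0 < x) (h2 : x < 1) :
    rogersL (-x / (1 - x)) = -rogersL x := by
  have h1x : (0:ℝ) < 1 - x := by linarith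
  have habs : |(-x / (1 - x))| = x / (1 - x) := by
    rw [abs_div, abs_neg, abs_of_pos h1, abs_of_pos h1x]
  have h1u : (1 : ℝ) - (-x / (1 - x)) = (1 - x)⁻¹ := by field_simp; ring
  unfold rogersL
  rw [landen_Li2 x h1 h2, habs, h1u, Real.log_inv,
    Real.log_div (ne_of_gt h1) (ne_of_gt h1x), abs_of_pos h1]
  ring
end

section
/- For all 0 < x < 1 and 0 < y < 1, L(x) + L(y) = L(xy) + L(x(1−y)/(1−xy)) + L(y(1−x)/(1−xy)) (Abel's functional equation for the Rogers L-function). -/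
open Real MeasureTheory intervalIntegral Filter Topology Set

-- integrand
noncomputable def li2f (t : ℝ) : ℝ := Real.log (1 - t) / t

lemma li2f_contAt {t : ℝ} (ht : t ≠ 0) (ht1 : t ≠ 1) : ContinuousAt li2f t := by
  apply ContinuousAt.div _ continuousAt_id ht
  exact (Real.continuousAt_log (by simpa [sub_eq_zero] using fun h => ht1 h.symm)).comp
    (continuousAt_const.sub continuousAt_id)

lemma li2f_tendsto_zero : Tendsto li2f (𝓝[≠] (0:ℝ)) (𝓝 (-1)) := by
  have h : HasDerivAt (fun t : ℝ => Real.log (1 - t)) (-1) 0 := by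
    have h1 : HasDerivAt (fun t : ℝ => 1 - t) (-1) 0 :=
      by simpa [Pi.sub_def] using (hasDerivAt_const (0:ℝ) 1).sub (hasDerivAt_id 0)
    have := (Real.hasDerivAt_log (by norm_num : (1:ℝ) - 0 ≠ 0)).comp 0 h1
    simpa [Function.comp_def] using this
  have := hasDerivAt_iff_tendsto_slope.mp h
  refine this.congr' ?_
  filter_upwards [self_mem_nhdsWithin] with t ht
  simp [slope, li2f, div_eq_inv_mul]

lemma li2f_intervalIntegrable {b : ℝ} (hb : b < 1) (hb0 : 0 ≤ b) :
    IntervalIntegrable li2f volume 0 b := by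
  set g : ℝ → ℝ := fun t => if t = 0 then -1 else li2f t with hg
  have hgc : ContinuousOn g (Set.Icc 0 b) := by
    intro t ht
    rcases eq_or_ne t 0 with rfl | ht0
    · apply ContinuousAt.continuousWithinAt
      rw [ContinuousAt]
      have h0 : g 0 = -1 := by simp [hg]
      rw [h0, ← nhdsNE_sup_pure 0, tendsto_sup]
      constructor
      · refine li2f_tendsto_zero.congr' ?_
        filter_upwards [self_mem_nhdsWithin] with s hs
        simp [hg, if_neg (by simpa using hs)]
      · simpa [hg] using tendsto_pure_nhds g 0
    · apply ContinuousAt.continuousWithinAt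
      have : ContinuousAt li2f t := li2f_contAt ht0 (by rintro rfl; exact absurd ht.2 (by linarith))
      refine this.congr ?_
      filter_upwards [isOpen_compl_singleton.mem_nhds ht0] with s hs
      simp [hg, if_neg (by simpa using hs)]
  have hgi : IntervalIntegrable g volume 0 b := hgc.intervalIntegrable_of_Icc hb0
  refine hgi.congr ?_
  have : ∀ t ∈ Set.uIoc (0:ℝ) b, g t = li2f t := by
    intro t ht
    rw [Set.uIoc_of_le hb0] at ht
    simp [hg, ne_of_gt ht.1]
  exact this

lemma hasDerivAt_Li2' {u : ℝ} (h1 : 0 < u) (h2 : u < 1) :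
    HasDerivAt (fun v => -∫ t in (0:ℝ)..v, li2f t) (-(Real.log (1 - u) / u)) u := by
  have key : HasDerivAt (fun v => ∫ t in (0:ℝ)..v, li2f t) (li2f u) u := by
    apply integral_hasDerivAt_right (li2f_intervalIntegrable h2 h1.le)
    · exact ContinuousAt.stronglyMeasurableAtFilter (isOpen_Ioo (a := (0:ℝ)) (b := 1))
        (fun v hv => li2f_contAt hv.1.ne' hv.2.ne) u ⟨h1, h2⟩
    · exact li2f_contAt h1.ne' h2.ne
  have := key.neg
  simpa [li2f, Pi.neg_def] using this

lemma hasDerivAt_Li2 {u : ℝ} (h1 : 0 < u) (h2 : u < 1) :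
    HasDerivAt Li2 (-(Real.log (1 - u) / u)) u := by
  have : Li2 = fun v => -∫ t in (0:ℝ)..v, li2f t := by
    funext v; simp [Li2, li2f]
  rw [this]; exact hasDerivAt_Li2' h1 h2

lemma hasDerivAt_log_one_sub {u : ℝ} (h2 : u < 1) :
    HasDerivAt (fun v : ℝ => Real.log (1 - v)) (-(1 - u)⁻¹) u := by
  have h1 : HasDerivAt (fun v : ℝ => 1 - v) (-1) u := by
    simpa [Pi.sub_def] using (hasDerivAt_const u (1:ℝ)).sub (hasDerivAt_id u)
  have := (Real.hasDerivAt_log (by linarith : (1:ℝ) - u ≠ 0)).comp u h1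
  simpa [Function.comp_def] using this

lemma hasDerivAt_rogersL {u : ℝ} (h1 : 0 < u) (h2 : u < 1) :
    HasDerivAt rogersL (-(1/2) * (Real.log (1 - u) / u + Real.log u / (1 - u))) u := by
  have hu1 : (0:ℝ) < 1 - u := by linarith
  have hmain : HasDerivAt (fun v => Li2 v + (1/2) * Real.log v * Real.log (1 - v))
      (-(1/2) * (Real.log (1 - u) / u + Real.log u / (1 - u))) u := by
    have hlog : HasDerivAt (fun v : ℝ => (1/2) * Real.log v) ((1/2) * u⁻¹) u :=
      (Real.hasDerivAt_log h1.ne').const_mul (1/2)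
    have hprod := hlog.mul (hasDerivAt_log_one_sub h2)
    have := (hasDerivAt_Li2 h1 h2).add hprod
    refine this.congr_deriv ?_
    field_simp
    ring
  refine hmain.congr_of_eventuallyEq ?_
  filter_upwards [isOpen_Ioi.mem_nhds (h1 : (0:ℝ) < u)] with v hv
  rw [rogersL, abs_of_pos (hv : (0:ℝ) < v)]

lemma abel_deriv (x : ℝ) (hx1 : 0 < x) (hx2 : x < 1) {y : ℝ} (hy1 : 0 < y) (hy2 : y < 1) :
    HasDerivAt (fun t => rogersL x + rogersL t - rogersL (x*t)
      - rogersL (x*(1-t)/(1-x*t)) - rogersL (t*(1-x)/(1-x*t))) 0 y := by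
  have hxy : x * y < 1 := by nlinarith
  have hxy0 : 0 < x * y := mul_pos hx1 hy1
  have hD : (0:ℝ) < 1 - x * y := by linarith
  have h1x : (0:ℝ) < 1 - x := by linarith
  have h1y : (0:ℝ) < 1 - y := by linarith
  have hu2pos : 0 < x*(1-y)/(1-x*y) := by positivity
  have hu2lt : x*(1-y)/(1-x*y) < 1 := by rw [div_lt_one hD]; nlinarith
  have hu3pos : 0 < y*(1-x)/(1-x*y) := by positivity
  have hu3lt : y*(1-x)/(1-x*y) < 1 := by rw [div_lt_one hD]; nlinarith
  -- derivatives of inner maps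
  have hu1 : HasDerivAt (fun t : ℝ => x * t) x y := by
    simpa using (hasDerivAt_id y).const_mul x
  have hN2 : HasDerivAt (fun t : ℝ => x * (1 - t)) (-x) y := by
    simpa using ((hasDerivAt_const y (1:ℝ)).sub (hasDerivAt_id y)).const_mul x
  have hD' : HasDerivAt (fun t : ℝ => 1 - x * t) (-x) y := by
    simpa [Pi.sub_def] using (hasDerivAt_const y (1:ℝ)).sub ((hasDerivAt_id y).const_mul x)
  have hu2 : HasDerivAt (fun t : ℝ => x*(1-t)/(1-x*t)) (-(x*(1-x))/(1-x*y)^2) y := by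
    have := hN2.div hD' hD.ne'
    refine this.congr_deriv ?_
    field_simp
    ring
  have hN3 : HasDerivAt (fun t : ℝ => t * (1 - x)) (1-x) y := by
    simpa using (hasDerivAt_id y).mul_const (1-x)
  have hu3 : HasDerivAt (fun t : ℝ => t*(1-x)/(1-x*t)) ((1-x)/(1-x*y)^2) y := by
    have := hN3.div hD' hD.ne'
    refine this.congr_deriv ?_
    field_simp
    ring
  have c1 := (hasDerivAt_rogersL hxy0 hxy).comp y hu1
  have c2 := (hasDerivAt_rogersL hu2pos hu2lt).comp y hu2
  have c3 := (hasDerivAt_rogersL hu3pos hu3lt).comp y hu3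
  have total := ((((hasDerivAt_const y (rogersL x)).add
      (hasDerivAt_rogersL hy1 hy2)).sub c1).sub c2).sub c3
  refine total.congr_deriv ?_
  have e2 : 1 - x*(1-y)/(1-x*y) = (1-x)/(1-x*y) := by field_simp; ring
  have e3 : 1 - y*(1-x)/(1-x*y) = (1-y)/(1-x*y) := by rw [eq_div_iff hD.ne', sub_mul, div_mul_cancel₀ _ hD.ne']; ring
  rw [e2, e3, Real.log_mul hx1.ne' hy1.ne',
    Real.log_div (mul_pos hx1 h1y).ne' hD.ne', Real.log_mul hx1.ne' h1y.ne',
    Real.log_div (mul_pos hy1 h1x).ne' hD.ne', Real.log_mul hy1.ne' h1x.ne',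
    Real.log_div h1x.ne' hD.ne', Real.log_div h1y.ne' hD.ne']
  field_simp
  have hw : (1 - y*x) * (1 - y*x)⁻¹ = 1 := mul_inv_cancel₀ (by rw [mul_comm]; exact hD.ne')
  linear_combination (-((y-1)*Real.log (1-y) - y*Real.log y + (1-y)*Real.log (1-y*x))) * hw

lemma rogersL_tendsto_zero : Tendsto rogersL (𝓝[>] (0:ℝ)) (𝓝 0) := by
  -- Li2 part
  have hint : IntervalIntegrable li2f volume 0 (1/2) := li2f_intervalIntegrable (by norm_num) (by norm_num)
  have hcont : ContinuousOn (fun b => ∫ t in (0:ℝ)..b, li2f t) (Set.uIcc 0 (1/2)) :=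
    continuousOn_primitive_interval' hint Set.left_mem_uIcc
  have hLi2 : Tendsto Li2 (𝓝[>] (0:ℝ)) (𝓝 0) := by
    have h0 : Tendsto (fun b => ∫ t in (0:ℝ)..b, li2f t) (𝓝[Set.uIcc 0 (1/2)] 0) (𝓝 0) := by
      have := (hcont 0 Set.left_mem_uIcc).tendsto
      simpa using this
    have hle : 𝓝[>] (0:ℝ) ≤ 𝓝[Set.uIcc 0 (1/2)] 0 := by
      rw [← nhdsWithin_Ioo_eq_nhdsGT (by norm_num : (0:ℝ) < 1/2)]
      exact nhdsWithin_mono 0 (fun t ht => by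
        rw [Set.uIcc_of_le (by norm_num : (0:ℝ) ≤ 1/2)]; exact ⟨ht.1.le, ht.2.le⟩)
    have h2 := (h0.mono_left hle).neg
    rw [neg_zero] at h2
    refine (h2.congr' ?_)
    filter_upwards with t; simp [Li2, li2f]
  -- log product part
  have hA : Tendsto (fun t : ℝ => Real.log t * t) (𝓝[>] (0:ℝ)) (𝓝 0) := by
    simpa using tendsto_log_mul_rpow_nhdsGT_zero one_pos
  have hB : Tendsto li2f (𝓝[>] (0:ℝ)) (𝓝 (-1)) :=
    li2f_tendsto_zero.mono_left (nhdsWithin_mono 0 (fun t ht => ne_of_gt ht))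
  have hprod : Tendsto (fun t : ℝ => Real.log t * Real.log (1 - t)) (𝓝[>] (0:ℝ)) (𝓝 0) := by
    have := hA.mul hB
    rw [zero_mul] at this
    refine this.congr' ?_
    filter_upwards [self_mem_nhdsWithin] with t ht
    have ht0 : t ≠ 0 := ne_of_gt ht
    rw [li2f]; field_simp
  have hsum := hLi2.add (hprod.const_mul (1/2))
  have h0 : (0:ℝ) + 1/2 * 0 = 0 := by norm_num
  rw [h0] at hsum
  refine hsum.congr' ?_
  filter_upwards [self_mem_nhdsWithin] with t ht
  rw [rogersL, abs_of_pos (ht : (0:ℝ) < t)]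
  ring

theorem rogersL_abel (x y : ℝ) (hx1 : 0 < x) (hx2 : x < 1) (hy1 : 0 < y) (hy2 : y < 1) :
    rogersL x + rogersL y =
      rogersL (x * y) + rogersL (x * (1 - y) / (1 - x * y))
        + rogersL (y * (1 - x) / (1 - x * y)) := by
  set G : ℝ → ℝ := fun t => rogersL x + rogersL t - rogersL (x*t)
      - rogersL (x*(1-t)/(1-x*t)) - rogersL (t*(1-x)/(1-x*t)) with hGdef
  have hG : ∀ t ∈ Set.Ioo (0:ℝ) 1, HasDerivAt G 0 t := fun t ht =>
    abel_deriv x hx1 hx2 ht.1 ht.2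
  have hconst : ∀ a ∈ Set.Ioo (0:ℝ) 1, ∀ b ∈ Set.Ioo (0:ℝ) 1, a ≤ b → G b = G a := by
    intro a ha b hb hab
    have hsub : Set.Icc a b ⊆ Set.Ioo (0:ℝ) 1 := fun t ht =>
      ⟨lt_of_lt_of_le ha.1 ht.1, lt_of_le_of_lt ht.2 hb.2⟩
    exact constant_of_has_deriv_right_zero
      (fun t ht => ((hG t (hsub ht)).continuousAt).continuousWithinAt)
      (fun t ht => (hG t (hsub (Set.Ico_subset_Icc_self ht))).hasDerivWithinAt)
      b (Set.right_mem_Icc.2 hab)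
  have hL0 := rogersL_tendsto_zero
  have hIoo : Set.Ioo (0:ℝ) 1 ∈ 𝓝[>] (0:ℝ) :=
    Ioo_mem_nhdsGT_of_mem ⟨le_refl 0, one_pos⟩
  -- argument limits
  have harg1 : Tendsto (fun t : ℝ => x*t) (𝓝[>] (0:ℝ)) (𝓝[>] (0:ℝ)) := by
    rw [tendsto_nhdsWithin_iff]
    constructor
    · have h := (continuous_const.mul continuous_id :
        Continuous (fun t : ℝ => x * t)).tendsto 0
      simp only [Pi.mul_apply, id, mul_zero] at h
      exact h.mono_left nhdsWithin_le_nhds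
    · filter_upwards [self_mem_nhdsWithin] with t ht
      exact mul_pos hx1 ht
  have harg2 : Tendsto (fun t : ℝ => x*(1-t)/(1-x*t)) (𝓝[>] (0:ℝ)) (𝓝 x) := by
    have h : ContinuousAt (fun t : ℝ => x*(1-t)/(1-x*t)) 0 := by
      apply ContinuousAt.div
      · fun_prop
      · fun_prop
      · norm_num
    have := h.tendsto.mono_left (nhdsWithin_le_nhds (s := Set.Ioi (0:ℝ)))
    simpa using this
  have harg3 : Tendsto (fun t : ℝ => t*(1-x)/(1-x*t)) (𝓝[>] (0:ℝ)) (𝓝[>] (0:ℝ)) := by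
    rw [tendsto_nhdsWithin_iff]
    constructor
    · have h : ContinuousAt (fun t : ℝ => t*(1-x)/(1-x*t)) 0 := by
        apply ContinuousAt.div
        · fun_prop
        · fun_prop
        · norm_num
      have := h.tendsto.mono_left (nhdsWithin_le_nhds (s := Set.Ioi (0:ℝ)))
      simpa using this
    · filter_upwards [hIoo] with t ht
      have h1 : (0:ℝ) < 1 - x*t := by nlinarith [ht.1, ht.2]
      have h2 : (0:ℝ) < 1 - x := by linarith
      exact div_pos (mul_pos ht.1 h2) h1
  have hGt : Tendsto G (𝓝[>] (0:ℝ)) (𝓝 0) := by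
    have hx' : ContinuousAt rogersL x := (hasDerivAt_rogersL hx1 hx2).continuousAt
    have := ((((tendsto_const_nhds (x := rogersL x) (f := 𝓝[>] (0:ℝ))).add
      hL0).sub (hL0.comp harg1)).sub (hx'.tendsto.comp harg2)).sub (hL0.comp harg3)
    have hval : rogersL x + 0 - 0 - rogersL x - 0 = 0 := by ring
    rw [hval] at this
    exact this
  have hEv : G =ᶠ[𝓝[>] (0:ℝ)] fun _ => G y := by
    filter_upwards [hIoo] with t ht
    rcases le_total t y with h | h
    · exact (hconst t ht y ⟨hy1, hy2⟩ h).symm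
    · exact hconst y ⟨hy1, hy2⟩ t ht h
  have hzero : G y = 0 := by
    have h1 : Tendsto (fun _ : ℝ => G y) (𝓝[>] (0:ℝ)) (𝓝 0) :=
      (tendsto_congr' hEv).mp hGt
    exact (tendsto_nhds_unique h1 tendsto_const_nhds).symm ▸ rfl
  have := hzero
  simp only [hGdef] at this
  linarith
end
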